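/- arXiv:2208.00157 — 3 statements merged into one kernel-verified Lean document; each statement's English description precedes it below -/
import Mathlib

section
/- Let b ≥ 2 and x ∈ [0,1). Let y = real_b(comp(seq_b(x))) be the real whose base-b expansion is the digit-complement of that of x. Then dim_FS^b(x) = dim_FS^b(y). -/
open Filter Set
open scoped ENNReal

/-- A finite-state transducer over alphabet `A`, with states `Fin n`. -/
structure FST (A : Type) where
  n : ℕ
  tr : Fin n → A → Fin n
  out1 : Fin n → A → List A
  q0 : Fin n

/-- Extension of the transition function to strings. -/
def FST.deltaS {A : Type} (T : FST A) : Fin T.n → List A → Fin T.n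
  | q, [] => q
  | q, a :: w => T.deltaS (T.tr q a) w

/-- Extension of the output function to strings. -/
def FST.nuS {A : Type} (T : FST A) : Fin T.n → List A → List A
  | _, [] => []
  | q, a :: w => T.out1 q a ++ T.nuS (T.tr q a) w

/-- The output of `T` on input `w`. -/
def FST.out {A : Type} (T : FST A) (w : List A) : List A := T.nuS T.q0 w

/-- `T`-information content of a string: shortest input producing it (`⊤` if none). -/
noncomputable def Kfst {A : Type} (T : FST A) (w : List A) : ℕ∞ :=
  sInf {k : ℕ∞ | ∃ π : List A, T.out π = w ∧ (π.length : ℕ∞) = k}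

/-- The real number in `[0,1)` with finite base-`b` expansion `w`. -/
noncomputable def realb (b : ℕ) (w : List (Fin b)) : ℝ :=
  ∑ i : Fin w.length, (w.get i : ℝ) / (b : ℝ) ^ (i.1 + 1)

/-- The real number with base-`b` expansion `S`. -/
noncomputable def realSeq (b : ℕ) (S : ℕ → Fin b) : ℝ :=
  ∑' i : ℕ, (S i : ℝ) / (b : ℝ) ^ (i + 1)

/-- The length-`n` prefix of a sequence, as a string. -/
def pre {A : Type} (S : ℕ → A) (n : ℕ) : List A := List.ofFn (fun i : Fin n => S i.1)

/-- Base-`b` `T`-information content of `x` at precision `δ`. -/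
noncomputable def Kprec (b : ℕ) (T : FST (Fin b)) (δ : ℝ) (x : ℝ) : ℕ∞ :=
  sInf {k : ℕ∞ | ∃ w : List (Fin b), |realb b w - x| < δ ∧ Kfst T w = k}

/-- Base-`b` finite-state dimension of a point of `[0,1)`. -/
noncomputable def dimFSb (b : ℕ) (x : ℝ) : ℝ≥0∞ :=
  ⨅ T : FST (Fin b),
    Filter.liminf (fun δ : ℝ =>
      (Kprec b T δ x : ℝ≥0∞) / ENNReal.ofReal (Real.logb b (1/δ)))
      (nhdsWithin 0 (Set.Ioi 0))

/-- Base-`b` finite-state dimension of a subset of `[0,1)`. -/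
noncomputable def dimFSbSet (b : ℕ) (A : Set ℝ) : ℝ≥0∞ :=
  ⨅ T : FST (Fin b), ⨆ x ∈ A,
    Filter.liminf (fun δ : ℝ =>
      (Kprec b T δ x : ℝ≥0∞) / ENNReal.ofReal (Real.logb b (1/δ)))
      (nhdsWithin 0 (Set.Ioi 0))

/-- Finite-state dimension of a sequence (Doty–Moser characterization). -/
noncomputable def dimFSseq {A : Type} (S : ℕ → A) : ℝ≥0∞ :=
  ⨅ T : FST A,
    Filter.liminf (fun n : ℕ => (Kfst T (pre S n) : ℝ≥0∞) / (n : ℝ≥0∞)) Filter.atTop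

/-- Finite-state dimension of a set of sequences. -/
noncomputable def dimFSseqSet {A : Type} (X : Set (ℕ → A)) : ℝ≥0∞ :=
  ⨅ T : FST A, ⨆ S ∈ X,
    Filter.liminf (fun n : ℕ => (Kfst T (pre S n) : ℝ≥0∞) / (n : ℝ≥0∞)) Filter.atTop

/-- digit complement of a sequence -/
def compSeq (b : ℕ) (S : ℕ → Fin b) : ℕ → Fin b :=
  fun i => ⟨b - 1 - (S i : ℕ), by have := (S i).isLt; omega⟩

/-- `S` ends with infinitely many digits `b-1`. -/
def endsBm1 (b : ℕ) (S : ℕ → Fin b) : Prop := ∃ N, ∀ i ≥ N, (S i : ℕ) = b - 1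

/-- A separator enumerator: a map into `[0,1)` with dense image in `[0,1]`. -/
def isSE {A : Type} (f : List A → ℝ) : Prop :=
  (∀ w, f w ∈ Set.Ico (0:ℝ) 1) ∧ ∀ y ∈ Set.Icc (0:ℝ) 1, y ∈ closure (Set.range f)

/-- `f`-`T`-information content of `x` at precision `δ`. -/
noncomputable def KprecF {A : Type} (T : FST A) (f : List A → ℝ) (δ : ℝ) (x : ℝ) : ℕ∞ :=
  sInf {k : ℕ∞ | ∃ w : List A, |f w - x| < δ ∧ Kfst T w = k}

/-- `f`-enumerator finite-state dimension of a point. -/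
noncomputable def dimFSf {A : Type} [Fintype A] (f : List A → ℝ) (x : ℝ) : ℝ≥0∞ :=
  ⨅ T : FST A,
    Filter.liminf (fun δ : ℝ =>
      (KprecF T f δ x : ℝ≥0∞) / ENNReal.ofReal (Real.logb (Fintype.card A) (1/δ)))
      (nhdsWithin 0 (Set.Ioi 0))

/-- `f`-enumerator finite-state dimension of a set. -/
noncomputable def dimFSfSet {A : Type} [Fintype A] (f : List A → ℝ) (E : Set ℝ) : ℝ≥0∞ :=
  ⨅ T : FST A, ⨆ x ∈ E,
    Filter.liminf (fun δ : ℝ =>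
      (KprecF T f δ x : ℝ≥0∞) / ENNReal.ofReal (Real.logb (Fintype.card A) (1/δ)))
      (nhdsWithin 0 (Set.Ioi 0))

open scoped Classical in
/-- Number of occurrences of `w` among the first `N` positions of `S`. -/
noncomputable def occCount {b : ℕ} (S : ℕ → Fin b) (w : List (Fin b)) (N : ℕ) : ℕ :=
  (Finset.range N).filter (fun i => ∀ j : Fin w.length, S (i + j.1) = w.get j) |>.card



namespace DimComp

open Filter Set
open scoped ENNReal

/-- minimum attained in nonempty subsets of ℕ∞ -/
lemma sInf_mem_enat {S : Set ℕ∞} (h : S.Nonempty) : sInf S ∈ S := by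
  by_cases hn : ∃ n : ℕ, (n : ℕ∞) ∈ S
  · obtain ⟨n, hn⟩ := hn
    have hA : {m : ℕ | (m : ℕ∞) ∈ S}.Nonempty := ⟨n, hn⟩
    have hmem : ((sInf {m : ℕ | (m : ℕ∞) ∈ S} : ℕ) : ℕ∞) ∈ S := Nat.sInf_mem hA
    have : sInf S = ((sInf {m : ℕ | (m : ℕ∞) ∈ S} : ℕ) : ℕ∞) := by
      apply le_antisymm (sInf_le hmem)
      apply le_sInf
      intro k hk
      cases k with
      | top => exact le_top
      | coe m => exact_mod_cast Nat.sInf_le (show m ∈ {m : ℕ | (m : ℕ∞) ∈ S} from hk)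
    rw [this]; exact hmem
  · obtain ⟨a, ha⟩ := h
    have : a = ⊤ := by
      cases a with
      | top => rfl
      | coe m => exact absurd ⟨m, ha⟩ hn
    subst this
    have : sInf S = ⊤ := by
      apply le_antisymm le_top
      apply le_sInf
      intro k hk
      cases k with
      | top => exact le_rfl
      | coe m => exact absurd ⟨m, hk⟩ hn
    rw [this]; exact ha

lemma FST.nuS_append {A : Type} (T : FST A) (u v : List A) :
    ∀ q, T.nuS q (u ++ v) = T.nuS q u ++ T.nuS (T.deltaS q u) v := by
  induction u with
  | nil => intro q; simp [FST.nuS, FST.deltaS]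
  | cons a u ih => intro q; simp [FST.nuS, FST.deltaS, ih]

/-- abstract machine semantics -/
def nuM {A Q : Type} (step : Q → A → Q) (out : Q → A → List A) : Q → List A → List A
  | _, [] => []
  | q, a :: w => out q a ++ nuM step out (step q a) w

/-- build an FST from an abstract machine on a fintype of states -/
noncomputable def mkFST {A : Type} (Q : Type) [Fintype Q]
    (step : Q → A → Q) (out : Q → A → List A) (init : Q) : FST A :=
  { n := Fintype.card Q
    tr := fun q a => (Fintype.equivFin Q) (step ((Fintype.equivFin Q).symm q) a)
    out1 := fun q a => out ((Fintype.equivFin Q).symm q) a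
    q0 := (Fintype.equivFin Q) init }

lemma mkFST_nuS {A : Type} (Q : Type) [Fintype Q]
    (step : Q → A → Q) (out : Q → A → List A) (init : Q) (w : List A) :
    ∀ q, (mkFST Q step out init).nuS ((Fintype.equivFin Q) q) w = nuM step out q w := by
  induction w with
  | nil => intro q; simp [FST.nuS, nuM]
  | cons a w ih =>
      intro q
      simp only [FST.nuS, nuM, mkFST, Equiv.symm_apply_apply]
      exact congrArg _ (ih (step q a))

lemma mkFST_out {A : Type} (Q : Type) [Fintype Q]
    (step : Q → A → Q) (out : Q → A → List A) (init : Q) (w : List A) :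
    (mkFST Q step out init).out w = nuM step out init w := by
  rw [FST.out]
  show (mkFST Q step out init).nuS ((Fintype.equivFin Q) init) w = _
  exact mkFST_nuS Q step out init w init

/-- digit complement -/
def cmp {b : ℕ} (d : Fin b) : Fin b := ⟨b - 1 - d.val, by have := d.isLt; omega⟩

lemma realb_nil (b : ℕ) : realb b [] = 0 := by simp [realb]

lemma realb_cons (b : ℕ) (a : Fin b) (w : List (Fin b)) :
    realb b (a :: w) = ((a : ℝ) + realb b w) / b := by
  show ∑ i : Fin (w.length + 1), (((a :: w).get i : ℕ) : ℝ) / (b:ℝ) ^ (i.1 + 1) = _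
  rw [Fin.sum_univ_succ]
  conv_rhs => rw [realb]
  rw [add_div, Finset.sum_div]
  congr 1
  · norm_num
  · apply Finset.sum_congr rfl
    intro i _
    rw [show ((a :: w).get i.succ) = w.get i from rfl]
    rw [show (i.succ : Fin (w.length+1)).1 = i.1 + 1 from rfl, pow_succ]
    rw [div_div]

lemma realb_append (b : ℕ) (u v : List (Fin b)) :
    realb b (u ++ v) = realb b u + realb b v / (b : ℝ) ^ u.length := by
  induction u with
  | nil =>
      show realb b v = realb b [] + realb b v / (b:ℝ) ^ (0:ℕ)
      rw [realb_nil, pow_zero, div_one, zero_add]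
  | cons a u ih =>
      have hb0 : (b:ℝ) ≠ 0 := Nat.cast_ne_zero.mpr (by have := a.isLt; omega)
      simp only [List.cons_append, realb_cons, ih, List.length_cons]
      rw [pow_succ]
      field_simp
      ring

lemma realb_map_cmp {b : ℕ} (hb : 1 ≤ b) (w : List (Fin b)) :
    realb b (w.map cmp) = 1 - ((b : ℝ) ^ w.length)⁻¹ - realb b w := by
  have hb0 : (0:ℝ) < b := by exact_mod_cast Nat.lt_of_lt_of_le Nat.zero_lt_one hb
  induction w with
  | nil => simp [realb_nil]
  | cons a w ih =>
      simp only [List.map_cons, realb_cons, ih, List.length_cons]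
      have ha : ((cmp a : Fin b) : ℝ) = (b : ℝ) - 1 - (a : ℝ) := by
        have h1 : (cmp a).val = b - 1 - a.val := rfl
        have h2 : a.val ≤ b - 1 := by have := a.isLt; omega
        have : ((cmp a).val : ℝ) = ((b:ℕ) : ℝ) - 1 - (a.val : ℝ) := by
          rw [h1]; push_cast [Nat.cast_sub (by omega : 1 ≤ b), Nat.cast_sub h2]; ring
        exact_mod_cast this
      rw [ha, pow_succ]
      field_simp
      ring

lemma realb_replicate_zero {b : ℕ} (hb : 0 < b) (m : ℕ) :
    realb b (List.replicate m (⟨0, hb⟩ : Fin b)) = 0 := by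
  induction m with
  | zero => simp [realb_nil]
  | succ m ih =>
      rw [List.replicate_succ, realb_cons, ih]
      show (((0:ℕ):ℝ) + 0) / (b:ℝ) = 0
      norm_num

lemma realb_replicate_big {b : ℕ} (hb : 1 ≤ b) (m : ℕ) :
    realb b (List.replicate m (cmp (⟨0, hb⟩ : Fin b))) = 1 - ((b : ℝ) ^ m)⁻¹ := by
  have := realb_map_cmp hb (List.replicate m (⟨0, hb⟩ : Fin b))
  rw [List.map_replicate, realb_replicate_zero hb] at this
  simpa using this

end DimComp

namespace DimComp

lemma summable_digits {b : ℕ} (hb : 2 ≤ b) (S : ℕ → Fin b) :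
    Summable (fun i : ℕ => (S i : ℝ) / (b:ℝ)^(i+1)) := by
  have hb1 : (1:ℝ) < (b:ℝ) := by exact_mod_cast hb
  have hg : Summable (fun i : ℕ => ((b:ℝ)⁻¹)^i) :=
    summable_geometric_of_lt_one (by positivity) (by rw [inv_lt_one_iff₀]; right; exact hb1)
  apply Summable.of_nonneg_of_le (fun i => by positivity) (fun i => ?_) hg
  have h1 : (S i : ℝ) ≤ (b:ℝ) := by
    have := (S i).isLt; exact_mod_cast this.le
  rw [inv_pow, pow_succ, div_le_iff₀ (by positivity)]
  have h2 : ((b:ℝ)^i)⁻¹ * ((b:ℝ)^i * (b:ℝ)) = (b:ℝ) := by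
    field_simp
  rw [h2]; exact h1

lemma realSeq_comp {b : ℕ} (hb : 2 ≤ b) (S : ℕ → Fin b) :
    realSeq b (compSeq b S) = 1 - realSeq b S := by
  have hb1 : (1:ℝ) < (b:ℝ) := by exact_mod_cast hb
  have hb0 : (0:ℝ) < (b:ℝ) := by positivity
  have hS : Summable (fun i : ℕ => (S i : ℝ) / (b:ℝ)^(i+1)) := summable_digits hb S
  have hC : Summable (fun i : ℕ => ((b:ℝ) - 1) / (b:ℝ)^(i+1)) := by
    have := summable_digits hb (fun _ => (⟨b-1, by omega⟩ : Fin b))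
    apply this.congr
    intro i
    have : (((b - 1 : ℕ)) : ℝ) = (b:ℝ) - 1 := by
      push_cast [Nat.cast_sub (by omega : 1 ≤ b)]; ring
    show ((((⟨b-1, by omega⟩ : Fin b)).val : ℕ) : ℝ) / _ = _
    rw [show ((⟨b-1, by omega⟩ : Fin b)).val = b - 1 from rfl, this]
  have hcast : ∀ i, ((compSeq b S i : Fin b) : ℝ) = ((b:ℝ) - 1) - (S i : ℝ) := by
    intro i
    have h2 : (S i).val ≤ b - 1 := by have := (S i).isLt; omega
    show (((b - 1 - (S i).val : ℕ)) : ℝ) = _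
    push_cast [Nat.cast_sub (by omega : 1 ≤ b), Nat.cast_sub h2]
    ring
  have key : realSeq b (compSeq b S)
      = ∑' i : ℕ, (((b:ℝ) - 1) / (b:ℝ)^(i+1) - (S i : ℝ) / (b:ℝ)^(i+1)) := by
    rw [realSeq]
    congr 1 with i
    rw [hcast i, sub_div]
  rw [key, Summable.tsum_sub hC hS]
  have hgeo : ∑' i : ℕ, ((b:ℝ) - 1) / (b:ℝ)^(i+1) = 1 := by
    have h1 : ∀ i : ℕ, ((b:ℝ) - 1) / (b:ℝ)^(i+1) = (((b:ℝ)-1)/(b:ℝ)) * ((b:ℝ)⁻¹)^i := by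
      intro i
      rw [inv_pow, pow_succ, mul_comm ((b:ℝ)^i) (b:ℝ), div_mul_eq_div_div, div_eq_mul_inv]
    rw [tsum_congr h1, tsum_mul_left, tsum_geometric_of_lt_one (by positivity)
      (by rw [inv_lt_one_iff₀]; right; exact hb1)]
    have h3 : (1 - (b:ℝ)⁻¹) = ((b:ℝ)-1)/(b:ℝ) := by field_simp
    rw [h3, mul_inv_cancel₀ (div_ne_zero (by linarith) (by positivity))]
  rw [hgeo, realSeq]

end DimComp

namespace DimComp

/-- states of the padding-complement machine -/
inductive CSt (n r : ℕ) : Type where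
  | U : Fin r → CSt n r
  | Fl : Fin n → Fin r → CSt n r
  | Bl : Fin n → Fin r → Fin r → CSt n r
  | Tl : Fin n → Fin r → CSt n r
  | P : CSt n r
  deriving DecidableEq, Fintype

variable {b : ℕ}

def cstep (T : FST (Fin b)) (r' : ℕ) : CSt T.n (r'+1) → Fin b → CSt T.n (r'+1)
  | .U c, a => if a.val = 0 then .Fl T.q0 c else .U ⟨min (c.val+1) r', by omega⟩
  | .Fl q c, a => if a.val = 0 then .Bl q c ⟨r', by omega⟩
      else if c.val = 0 then .P else .Tl q ⟨c.val - 1, by have := c.isLt; omega⟩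
  | .Bl q c i, a => if i.val = 0 then .Fl (T.tr q a) c
      else .Bl (T.tr q a) c ⟨i.val - 1, by have := i.isLt; omega⟩
  | .Tl q i, a => if i.val = 0 then .P else .Tl (T.tr q a) ⟨i.val - 1, by have := i.isLt; omega⟩
  | .P, _ => .P

def cout (T : FST (Fin b)) (r' L' : ℕ) (hb : 0 < b) : CSt T.n (r'+1) → Fin b → List (Fin b)
  | .U _, _ => []
  | .Fl _ _, _ => []
  | .Bl q _ _, a => (T.out1 q a).map cmp
  | .Tl q _, a => (T.out1 q a).map cmp
  | .P, _ => List.replicate (L'+1) (cmp ⟨0, hb⟩)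

noncomputable def TC (T : FST (Fin b)) (r' L' : ℕ) (hb : 0 < b) : FST (Fin b) :=
  mkFST (CSt T.n (r'+1)) (cstep T r') (cout T r' L' hb) (.U ⟨0, by omega⟩)

section Sim

variable (T : FST (Fin b)) (r' L' : ℕ) (hb : 0 < b)

local notation "ν" => nuM (cstep T r') (cout T r' L' hb)

lemma sim_pad (σ : List (Fin b)) :
    ν CSt.P σ = List.replicate ((L'+1) * σ.length) (cmp ⟨0, hb⟩) := by
  induction σ with
  | nil => simp [nuM]
  | cons a σ ih =>
      show cout T r' L' hb .P a ++ ν CSt.P σ = _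
      rw [ih, cout]
      rw [← List.replicate_add]
      congr 1
      simp [Nat.mul_succ, Nat.mul_add]
      ring

lemma sim_tail (τ : List (Fin b)) : ∀ (q : Fin T.n) (i : Fin (r'+1)) (σ : List (Fin b)),
    τ.length = i.val + 1 →
    ν (CSt.Tl q i) (τ ++ σ) = (T.nuS q τ).map cmp ++ ν CSt.P σ := by
  induction τ with
  | nil => intro q i σ h; simp at h
  | cons a τ ih =>
      intro q i σ h
      show cout T r' L' hb (.Tl q i) a ++ ν (cstep T r' (.Tl q i) a) (τ ++ σ) = _
      rw [cout, cstep]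
      by_cases hi : i.val = 0
      · have hτ : τ = [] := by
          apply List.eq_nil_of_length_eq_zero
          simp at h; omega
        subst hτ
        simp only [hi, if_pos]
        show (T.out1 q a).map cmp ++ ν CSt.P σ = (T.nuS q [a]).map cmp ++ ν CSt.P σ
        rw [show T.nuS q [a] = T.out1 q a ++ T.nuS (T.tr q a) [] from rfl]
        simp [FST.nuS]
      · simp only [hi, if_neg, if_false]
        rw [ih (T.tr q a) _ σ (by simp at h ⊢; omega)]
        rw [show T.nuS q (a :: τ) = T.out1 q a ++ T.nuS (T.tr q a) τ from rfl]
        simp [List.map_append]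

lemma sim_block (τ : List (Fin b)) : ∀ (q : Fin T.n) (c i : Fin (r'+1)) (σ : List (Fin b)),
    τ.length = i.val + 1 →
    ν (CSt.Bl q c i) (τ ++ σ) = (T.nuS q τ).map cmp ++ ν (CSt.Fl (T.deltaS q τ) c) σ := by
  induction τ with
  | nil => intro q c i σ h; simp at h
  | cons a τ ih =>
      intro q c i σ h
      show cout T r' L' hb (.Bl q c i) a ++ ν (cstep T r' (.Bl q c i) a) (τ ++ σ) = _
      rw [cout, cstep]
      by_cases hi : i.val = 0
      · have hτ : τ = [] := by
          apply List.eq_nil_of_length_eq_zero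
          simp at h; omega
        subst hτ
        simp only [hi, if_pos]
        rw [show T.nuS q [a] = T.out1 q a ++ T.nuS (T.tr q a) [] from rfl]
        rw [show T.deltaS q [a] = T.tr q a from rfl]
        simp [FST.nuS]
      · simp only [hi, if_neg, if_false]
        rw [ih (T.tr q a) c _ σ (by simp at h ⊢; omega)]
        rw [show T.nuS q (a :: τ) = T.out1 q a ++ T.nuS (T.tr q a) τ from rfl]
        rw [show T.deltaS q (a :: τ) = T.deltaS (T.tr q a) τ from rfl]
        simp [List.map_append]

end Sim

def encBody (hb : 2 ≤ b) (r' : ℕ) : ℕ → List (Fin b) → List (Fin b)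
  | 0, π => ⟨1, by omega⟩ :: π
  | t+1, π => ⟨0, by omega⟩ :: (π.take (r'+1) ++ encBody hb r' t (π.drop (r'+1)))

section Sim2

variable (T : FST (Fin b)) (r' L' : ℕ) (hb2 : 2 ≤ b)

local notation "ν" => nuM (cstep T r') (cout T r' L' (by omega : 0 < b))

lemma sim_body (t : ℕ) : ∀ (π : List (Fin b)) (q : Fin T.n) (c : Fin (r'+1)) (σ : List (Fin b)),
    π.length = t * (r'+1) + c.val →
    ν (CSt.Fl q c) (encBody hb2 r' t π ++ σ) = (T.nuS q π).map cmp ++ ν CSt.P σ := by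
  induction t with
  | zero =>
      intro π q c σ h
      rw [encBody]
      show cout T r' L' _ (.Fl q c) _ ++ ν (cstep T r' (.Fl q c) ⟨1, by omega⟩) (π ++ σ) = _
      rw [cout, cstep]
      rw [if_neg (by simp : ¬ ((⟨1, by omega⟩ : Fin b)).val = 0)]
      by_cases hc : c.val = 0
      · have hπ : π = [] := by
          apply List.eq_nil_of_length_eq_zero; omega
        subst hπ
        rw [if_pos hc]
        simp [FST.nuS]
      · rw [if_neg hc]
        rw [sim_tail T r' L' _ π q ⟨c.val - 1, by have := c.isLt; omega⟩ σ (by simp; omega)]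
        simp
  | succ t ih =>
      intro π q c σ σh
      rw [encBody]
      have hlen : r' + 1 ≤ π.length := by
        have := c.isLt
        have h2 : (t+1) * (r'+1) = t * (r'+1) + (r'+1) := by ring
        omega
      show cout T r' L' _ (.Fl q c) _ ++ ν (cstep T r' (.Fl q c) ⟨0, by omega⟩) _ = _
      rw [cout, cstep]
      rw [if_pos (by rfl : ((⟨0, by omega⟩ : Fin b)).val = 0)]
      rw [List.nil_append]
      have hassoc : ((π.take (r'+1) ++ encBody hb2 r' t (π.drop (r'+1))) ++ σ)
          = π.take (r'+1) ++ (encBody hb2 r' t (π.drop (r'+1)) ++ σ) := by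
        rw [List.append_assoc]
      rw [show ((π.take (r'+1) ++ encBody hb2 r' t (π.drop (r'+1))).append σ)
          = (π.take (r'+1) ++ encBody hb2 r' t (π.drop (r'+1))) ++ σ from rfl, hassoc]
      rw [sim_block T r' L' _ (π.take (r'+1)) q c ⟨r', by omega⟩
        (encBody hb2 r' t (π.drop (r'+1)) ++ σ)
        (by rw [List.length_take]; simp; omega)]
      rw [ih (π.drop (r'+1)) _ c σ
        (by rw [List.length_drop]
            have h2 : (t+1) * (r'+1) = t * (r'+1) + (r'+1) := by ring
            omega)]
      conv_rhs => rw [← List.take_append_drop (r'+1) π]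
      rw [FST.nuS_append]
      simp [List.map_append]

lemma sim_u (j : ℕ) : ∀ (c : Fin (r'+1)) (ρ : List (Fin b)) (hcj : c.val + j < r' + 1),
    ν (CSt.U c) (List.replicate j (⟨1, by omega⟩ : Fin b) ++ (⟨0, by omega⟩ : Fin b) :: ρ)
      = ν (CSt.Fl T.q0 ⟨c.val + j, by omega⟩) ρ := by
  induction j with
  | zero =>
      intro c ρ h
      show cout T r' L' _ (.U c) _ ++ ν (cstep T r' (.U c) ⟨0, by omega⟩) ρ = _
      rw [cout, cstep]
      rw [if_pos (by rfl : ((⟨0, by omega⟩ : Fin b)).val = 0)]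
      rw [List.nil_append]
      congr 2
      all_goals exact Fin.ext (by simp)
  | succ j ih =>
      intro c ρ h
      rw [List.replicate_succ, List.cons_append]
      show cout T r' L' _ (.U c) _ ++ ν (cstep T r' (.U c) ⟨1, by omega⟩) _ = _
      rw [cout, cstep]
      rw [if_neg (by simp : ¬ ((⟨1, by omega⟩ : Fin b)).val = 0)]
      rw [List.nil_append]
      have hc1 : c.val + 1 < r' + 1 := by omega
      have hmineq : (⟨min (c.val+1) r', by omega⟩ : Fin (r'+1)) = ⟨c.val + 1, hc1⟩ :=
        Fin.ext (by simp; omega)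
      rw [hmineq]
      rw [ih ⟨c.val + 1, hc1⟩ ρ (by simp only [Fin.val_mk]; omega)]
      congr 2
      all_goals exact Fin.ext (by simp only [Fin.val_mk]; omega)

end Sim2

def enc (hb2 : 2 ≤ b) (r' : ℕ) (π : List (Fin b)) (m' : ℕ) : List (Fin b) :=
  List.replicate (π.length % (r'+1)) (⟨1, by omega⟩ : Fin b)
    ++ (⟨0, by omega⟩ : Fin b) :: (encBody hb2 r' (π.length / (r'+1)) π
    ++ List.replicate m' (⟨0, by omega⟩ : Fin b))

lemma TC_out (T : FST (Fin b)) (r' L' : ℕ) (hb2 : 2 ≤ b) (π : List (Fin b)) (m' : ℕ) :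
    (TC T r' L' (by omega)).out (enc hb2 r' π m')
      = (T.out π).map cmp ++ List.replicate ((L'+1) * m') (cmp ⟨0, by omega⟩) := by
  rw [TC, mkFST_out, enc]
  have hmod : π.length % (r'+1) < r' + 1 := Nat.mod_lt _ (by omega)
  rw [sim_u T r' L' hb2 (π.length % (r'+1)) ⟨0, by omega⟩
    (encBody hb2 r' (π.length / (r'+1)) π ++ List.replicate m' (⟨0, by omega⟩ : Fin b))
    (by simp only [Fin.val_mk]; omega)]
  rw [sim_body T r' L' hb2 (π.length / (r'+1)) π T.q0
    ⟨(⟨0, by omega⟩ : Fin (r'+1)).val + π.length % (r'+1), by simp only [Fin.val_mk]; omega⟩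
    (List.replicate m' (⟨0, by omega⟩ : Fin b))
    (by show π.length = π.length / (r'+1) * (r'+1) + (0 + π.length % (r'+1))
        have h1 := Nat.div_add_mod π.length (r'+1)
        have h2 : (r'+1) * (π.length/(r'+1)) = (π.length/(r'+1)) * (r'+1) := Nat.mul_comm _ _
        omega)]
  rw [sim_pad]
  simp [FST.out]

lemma encBody_length (r' : ℕ) (t : ℕ) : ∀ (π : List (Fin b)) (hb2 : 2 ≤ b),
    t * (r'+1) ≤ π.length →
    (encBody hb2 r' t π).length = t + π.length + 1 := by
  induction t with
  | zero => intro π hb2 h; rw [encBody]; simp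
  | succ t ih =>
      intro π hb2 h
      rw [encBody]
      have h2 : (t+1) * (r'+1) = t * (r'+1) + (r'+1) := by ring
      simp only [List.length_cons, List.length_append, List.length_take]
      rw [ih (π.drop (r'+1)) hb2 (by rw [List.length_drop]; omega)]
      rw [List.length_drop]
      omega

lemma enc_length (hb2 : 2 ≤ b) (r' : ℕ) (π : List (Fin b)) (m' : ℕ) :
    (enc hb2 r' π m').length
      = π.length + π.length / (r'+1) + π.length % (r'+1) + 2 + m' := by
  rw [enc]
  simp only [List.length_append, List.length_replicate, List.length_cons]
  rw [encBody_length r' (π.length / (r'+1)) π hb2 (Nat.div_mul_le_self _ _)]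
  omega

end DimComp

namespace DimComp

lemma Kfst_le_of_out {A : Type} (T : FST A) (π : List A) :
    Kfst T (T.out π) ≤ (π.length : ℕ∞) := sInf_le ⟨π, rfl, rfl⟩

lemma Kprec_le_of_witness {b : ℕ} (T : FST (Fin b)) (δ y : ℝ) (w : List (Fin b))
    (h : |realb b w - y| < δ) : Kprec b T δ y ≤ Kfst T w := sInf_le ⟨w, h, rfl⟩

lemma key_step {b : ℕ} (hb2 : 2 ≤ b) (T : FST (Fin b)) (r' L' : ℕ) (δ x : ℝ)
    (hδ0 : 0 < δ) (hδ1 : δ < 1) (w : List (Fin b)) (hw : |realb b w - x| < δ)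
    (π : List (Fin b)) (hπ : T.out π = w) :
    Kprec b (TC T r' L' (by omega)) (2*δ) (1 - x)
      ≤ ((π.length + π.length / (r'+1) + (r'+1) + 1
          + ⌈Real.logb b (1/δ) / (L'+1)⌉₊ : ℕ) : ℕ∞) := by
  have hb0 : (0:ℝ) < (b:ℝ) := by positivity
  have hb1 : (1:ℝ) < (b:ℝ) := by exact_mod_cast hb2
  set m' : ℕ := ⌈Real.logb b (1/δ) / (L'+1)⌉₊ with hm'
  set M : ℕ := (L'+1) * m' with hM
  set u : List (Fin b) := (w.map cmp) ++ List.replicate M (cmp ⟨0, by omega⟩) with hu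
  -- value estimate
  have hlogpos : 0 ≤ Real.logb b (1/δ) := Real.logb_nonneg hb1 (by
    rw [le_div_iff₀ hδ0, one_mul]; linarith)
  have hMlog : Real.logb b (1/δ) ≤ (M : ℝ) := by
    have h1 : Real.logb b (1/δ) / (L'+1) ≤ (m' : ℝ) := Nat.le_ceil _
    have h2 : (0:ℝ) < (L'+1 : ℝ) := by positivity
    rw [div_le_iff₀ h2] at h1
    calc Real.logb b (1/δ) ≤ (m' : ℝ) * (L'+1) := h1
      _ = (M : ℝ) := by push_cast [hM]; ring
  have hbM : 1/δ ≤ (b:ℝ)^M := by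
    have h1 : (b:ℝ) ^ (Real.logb b (1/δ)) ≤ (b:ℝ) ^ (M:ℝ) :=
      Real.rpow_le_rpow_of_exponent_le hb1.le hMlog
    rw [Real.rpow_logb hb0 (by linarith) (by positivity)] at h1
    rw [Real.rpow_natCast] at h1
    exact h1
  have hinv : ((b:ℝ)^M)⁻¹ ≤ δ := by
    rw [inv_le_comm₀ (by positivity) hδ0, ← one_div]
    exact hbM
  have hval : |realb b u - (1 - x)| < 2*δ := by
    have e1 : realb b u = realb b (w.map cmp)
        + realb b (List.replicate M (cmp ⟨0, by omega⟩)) / (b:ℝ)^(w.length) := by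
      rw [hu, realb_append, List.length_map]
    rw [e1, realb_map_cmp (by omega) w, realb_replicate_big (by omega) M] at *
    have e2 : 1 - ((b:ℝ)^w.length)⁻¹ - realb b w + (1 - ((b:ℝ)^M)⁻¹) / (b:ℝ)^w.length - (1-x)
        = (x - realb b w) - ((b:ℝ)^(w.length + M))⁻¹ := by
      rw [pow_add]
      field_simp
      ring
    rw [e2]
    have h3 : ((b:ℝ)^(w.length + M))⁻¹ ≤ δ := by
      refine le_trans ?_ hinv
      apply inv_anti₀ (by positivity)
      apply pow_le_pow_right₀ hb1.le
      omega
    have h4 : |(x - realb b w) - ((b:ℝ)^(w.length + M))⁻¹|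
        ≤ |x - realb b w| + ((b:ℝ)^(w.length + M))⁻¹ := by
      rw [sub_eq_add_neg]
      refine (abs_add_le _ _).trans ?_
      rw [abs_neg, abs_of_nonneg (show (0:ℝ) ≤ ((b:ℝ)^(w.length + M))⁻¹ by positivity)]
    rw [abs_sub_comm] at hw
    linarith [h4, h3, hw]
  -- complexity estimate
  have hout : (TC T r' L' (by omega)).out (enc hb2 r' π m') = u := by
    rw [TC_out T r' L' hb2 π m', hπ, hu, hM]
  have hK : Kfst (TC T r' L' (by omega)) u ≤ ((enc hb2 r' π m').length : ℕ∞) := by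
    rw [← hout]; exact Kfst_le_of_out _ _
  refine le_trans (Kprec_le_of_witness _ _ _ u hval) (le_trans hK ?_)
  rw [enc_length hb2 r' π m']
  have hmlt := Nat.mod_lt π.length (show 0 < r'+1 by omega)
  have hnat : π.length + π.length / (r'+1) + π.length % (r'+1) + 2 + m'
      ≤ π.length + π.length / (r'+1) + (r'+1) + 1 + m' := by omega
  exact Nat.cast_le.mpr hnat

end DimComp

namespace DimComp

open Filter

lemma dim_comp_le (b : ℕ) (hb2 : 2 ≤ b) (x : ℝ) : dimFSb b (1 - x) ≤ dimFSb b x := by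
  have hb1 : (1:ℝ) < (b:ℝ) := by exact_mod_cast hb2
  have hb0 : (0:ℝ) < (b:ℝ) := by positivity
  apply ENNReal.le_of_forall_pos_le_add
  intro ε hε hD
  set D := dimFSb b x with hDdef
  set ε4 : ℝ≥0∞ := (ε : ℝ≥0∞) / 4 with hε4def
  have hε40 : ε4 ≠ 0 := by
    simp only [hε4def, ne_eq, ENNReal.div_eq_zero_iff]
    push_neg
    constructor
    · exact_mod_cast hε.ne'
    · norm_num
  have hε4top : ε4 ≠ ⊤ := by
    simp only [hε4def]
    exact (ENNReal.div_lt_top (by exact_mod_cast (ENNReal.coe_ne_top)) (by norm_num)).ne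
  have hε4sum : ε4 + ε4 + ε4 + ε4 = (ε : ℝ≥0∞) := by
    have h4 : ε4 * 4 = (ε : ℝ≥0∞) := ENNReal.div_mul_cancel (by norm_num) (by norm_num)
    calc ε4 + ε4 + ε4 + ε4 = ε4 * 4 := by ring
      _ = _ := h4
  -- choose a transducer nearly achieving dimension at x
  have hlt : D < D + ε4 := ENNReal.lt_add_right hD.ne hε40
  obtain ⟨T, hT⟩ := iInf_lt_iff.mp (show dimFSb b x < D + ε4 from hlt)
  set dbar := D + ε4 with hdbar
  have hdbartop : dbar ≠ ⊤ := by
    rw [hdbar]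
    exact ENNReal.add_ne_top.mpr ⟨hD.ne, hε4top⟩
  -- choose r and L
  obtain ⟨r0, hr0⟩ := ENNReal.exists_nat_gt (show dbar / ε4 ≠ ⊤ from
    (ENNReal.div_lt_top hdbartop hε40).ne)
  have hrle : dbar / ((r0+1 : ℕ) : ℝ≥0∞) ≤ ε4 := by
    have h1 : dbar ≤ ε4 * ((r0+1 : ℕ) : ℝ≥0∞) := by
      have h2 : dbar = dbar / ε4 * ε4 := (ENNReal.div_mul_cancel hε40 hε4top).symm
      rw [h2]
      calc dbar / ε4 * ε4 ≤ ((r0 : ℕ) : ℝ≥0∞) * ε4 :=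
            mul_le_mul_left hr0.le _
        _ ≤ ((r0+1 : ℕ) : ℝ≥0∞) * ε4 := by
            apply mul_le_mul_left
            exact_mod_cast Nat.le_succ r0
        _ = ε4 * ((r0+1 : ℕ) : ℝ≥0∞) := mul_comm _ _
    rw [ENNReal.div_le_iff (by exact_mod_cast Nat.succ_ne_zero r0) (by simp)]
    exact h1
  obtain ⟨L0, hL0⟩ := ENNReal.exists_nat_gt (show ε4⁻¹ ≠ ⊤ from ENNReal.inv_ne_top.mpr hε40)
  have hLle : (((L0+1 : ℕ) : ℝ≥0∞))⁻¹ ≤ ε4 := by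
    have h1 : ε4⁻¹ ≤ ((L0+1 : ℕ) : ℝ≥0∞) := by
      refine hL0.le.trans ?_
      exact_mod_cast Nat.le_succ L0
    calc (((L0+1 : ℕ) : ℝ≥0∞))⁻¹ ≤ (ε4⁻¹)⁻¹ := ENNReal.inv_le_inv.mpr h1
      _ = ε4 := inv_inv ε4
  -- the machine
  set T2 := TC T r0 L0 (show 0 < b by omega) with hT2
  -- constants
  set c2 : ℝ≥0∞ := ENNReal.ofReal (Real.logb b 2) with hc2
  have hc2top : c2 ≠ ⊤ := ENNReal.ofReal_ne_top
  set A : ℝ≥0∞ := dbar + ε4 + ε4 with hA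
  have hAtop : A ≠ ⊤ := by
    rw [hA]
    exact ENNReal.add_ne_top.mpr ⟨ENNReal.add_ne_top.mpr ⟨hdbartop, hε4top⟩, hε4top⟩
  set C0 : ℝ≥0∞ := ((r0 + 3 : ℕ) : ℝ≥0∞) with hC0
  set B : ℝ≥0∞ := A * c2 + C0 with hB
  have hBtop : B ≠ ⊤ := by
    rw [hB]
    exact ENNReal.add_ne_top.mpr ⟨ENNReal.mul_ne_top hAtop hc2top, by simp [hC0]⟩
  set β : ℝ≥0∞ := B / ε4 with hβ
  have hβtop : β ≠ ⊤ := (ENNReal.div_lt_top hBtop hε40).ne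
  set Mc : ℝ := β.toReal with hMc
  have hbMc : (0:ℝ) < (b:ℝ) ^ (Mc : ℝ) := Real.rpow_pos_of_pos hb0 _
  set δ1 : ℝ := min (1/4) (1 / (4 * (b:ℝ) ^ (Mc : ℝ))) with hδ1def
  have hδ1pos : 0 < δ1 := by
    apply lt_min (by norm_num)
    positivity
  -- the frequently estimate
  have hfreq : ∃ᶠ δ in (nhdsWithin (0:ℝ) (Set.Ioi 0)),
      (Kprec b T δ x : ℝ≥0∞) / ENNReal.ofReal (Real.logb b (1/δ)) < dbar :=
    frequently_lt_of_liminf_lt (by isBoundedDefault) hT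
  have hev : ∀ᶠ δ in (nhdsWithin (0:ℝ) (Set.Ioi 0)), 0 < δ ∧ δ < δ1 := by
    have h1 : ∀ᶠ δ in (nhdsWithin (0:ℝ) (Set.Ioi 0)), δ ∈ Set.Ioi (0:ℝ) :=
      eventually_mem_nhdsWithin
    have h2 : ∀ᶠ δ in (nhdsWithin (0:ℝ) (Set.Ioi 0)), δ < δ1 := by
      apply Filter.Eventually.filter_mono nhdsWithin_le_nhds
      exact Filter.Tendsto.eventually_lt_const hδ1pos Filter.tendsto_id
    filter_upwards [h1, h2] with δ hδ hδ'
    exact ⟨hδ, hδ'⟩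
  have hmain : ∀ δ : ℝ,
      ((Kprec b T δ x : ℝ≥0∞) / ENNReal.ofReal (Real.logb b (1/δ)) < dbar ∧ (0 < δ ∧ δ < δ1)) →
      (Kprec b T2 (2*δ) (1-x) : ℝ≥0∞) / ENNReal.ofReal (Real.logb b (1/(2*δ))) ≤ A + ε4 := by
    intro δ ⟨hg, hδ0, hδ1'⟩
    have hδu : δ < 1 := lt_of_lt_of_le hδ1' (le_trans (min_le_left _ _) (by norm_num))
    set E : ℝ≥0∞ := ENNReal.ofReal (Real.logb b (1/δ)) with hE
    set E2 : ℝ≥0∞ := ENNReal.ofReal (Real.logb b (1/(2*δ))) with hE2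
    have hlogpos : 0 < Real.logb b (1/δ) :=
      Real.logb_pos hb1 (by rw [lt_div_iff₀ hδ0, one_mul]; linarith)
    have h2δ : 2*δ < 1 := by
      have := lt_of_lt_of_le hδ1' (min_le_left _ _)
      linarith
    have hlog2pos : 0 < Real.logb b (1/(2*δ)) :=
      Real.logb_pos hb1 (by rw [lt_div_iff₀ (by linarith), one_mul]; linarith)
    have hE0 : E ≠ 0 := by
      rw [hE]; simpa using hlogpos
    have hEtop : E ≠ ⊤ := ENNReal.ofReal_ne_top
    have hE20 : E2 ≠ 0 := by
      rw [hE2]; simpa using hlog2pos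
    have hE2top : E2 ≠ ⊤ := ENNReal.ofReal_ne_top
    -- extract witness
    have hKlt : (Kprec b T δ x : ℝ≥0∞) < dbar * E := by
      rw [ENNReal.div_lt_iff (Or.inl hE0) (Or.inl hEtop)] at hg
      exact hg
    have hKfin : (Kprec b T δ x : ℝ≥0∞) < ⊤ := by
      refine hKlt.trans ?_
      exact ENNReal.mul_lt_top hdbartop.lt_top hEtop.lt_top
    have hKtop : Kprec b T δ x ≠ ⊤ := by
      intro h
      rw [h] at hKfin
      simp at hKfin
    have hne1 : {k : ℕ∞ | ∃ w : List (Fin b), |realb b w - x| < δ ∧ Kfst T w = k}.Nonempty := by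
      by_contra hcon
      rw [Set.not_nonempty_iff_eq_empty] at hcon
      apply hKtop
      show sInf _ = ⊤
      rw [hcon, sInf_empty]
    obtain ⟨w, hw, hKw⟩ := sInf_mem_enat hne1
    have hKwtop : Kfst T w ≠ ⊤ := by rw [hKw]; exact hKtop
    have hne2 : {k : ℕ∞ | ∃ π : List (Fin b), T.out π = w ∧ (π.length : ℕ∞) = k}.Nonempty := by
      by_contra hcon
      rw [Set.not_nonempty_iff_eq_empty] at hcon
      apply hKwtop
      show sInf _ = ⊤
      rw [hcon, sInf_empty]
    obtain ⟨π, hπ, hπlen⟩ := sInf_mem_enat hne2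
    set k := π.length with hk
    have hKw' : Kfst T w = Kprec b T δ x := hKw
    have hπlen' : ((k : ℕ) : ℕ∞) = Kfst T w := hπlen
    have hkK : ((k : ℕ∞) : ℝ≥0∞) = (Kprec b T δ x : ℝ≥0∞) := by
      rw [hπlen', hKw']
    have hkE : ((k : ℕ) : ℝ≥0∞) ≤ dbar * E := by
      have h5 : ((k : ℕ∞) : ℝ≥0∞) ≤ dbar * E := hkK ▸ hKlt.le
      simpa using h5
    -- apply key_step
    set m' : ℕ := ⌈Real.logb b (1/δ) / (L0+1)⌉₊ with hm'
    have hkey := key_step hb2 T r0 L0 δ x hδ0 hδu w hw π hπ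
    have hcast : (Kprec b T2 (2*δ) (1-x) : ℝ≥0∞)
        ≤ ((k : ℝ≥0∞) + ((k / (r0+1) : ℕ) : ℝ≥0∞) + ((r0+2 : ℕ) : ℝ≥0∞) + (m' : ℝ≥0∞)) := by
      have hkey' : Kprec b T2 (2*δ) (1-x)
          ≤ ((k + k / (r0+1) + (r0+1) + 1 + m' : ℕ) : ℕ∞) := by
        rw [hT2, hk, hm']
        exact hkey
      have h1 : (Kprec b T2 (2*δ) (1-x) : ℝ≥0∞)
          ≤ (((k + k / (r0+1) + (r0+1) + 1 + m' : ℕ) : ℕ∞) : ℝ≥0∞) :=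
        ENat.toENNReal_le.mpr hkey'
      refine h1.trans ?_
      push_cast
      ring_nf
      exact le_refl _
    -- bound the pieces
    have hdivk : ((k / (r0+1) : ℕ) : ℝ≥0∞) ≤ ε4 * E := by
      have h1 : ((k / (r0+1) : ℕ) : ℝ≥0∞) ≤ ((k:ℕ) : ℝ≥0∞) / ((r0+1 : ℕ) : ℝ≥0∞) := by
        rw [ENNReal.le_div_iff_mul_le (Or.inl (by exact_mod_cast Nat.succ_ne_zero r0))
          (Or.inl (by simp))]
        exact_mod_cast Nat.cast_le.mpr (Nat.div_mul_le_self k (r0+1))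
      refine h1.trans ?_
      calc ((k:ℕ) : ℝ≥0∞) / ((r0+1 : ℕ) : ℝ≥0∞) ≤ (dbar * E) / ((r0+1 : ℕ) : ℝ≥0∞) :=
            ENNReal.div_le_div_right hkE _
        _ = (dbar / ((r0+1 : ℕ) : ℝ≥0∞)) * E := by
            rw [div_eq_mul_inv, div_eq_mul_inv, mul_right_comm]
        _ ≤ ε4 * E := mul_le_mul_left hrle _
    have hm'le : (m' : ℝ≥0∞) ≤ ε4 * E + 1 := by
      have h1 : (m' : ℝ) < Real.logb b (1/δ) / (L0+1) + 1 :=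
        Nat.ceil_lt_add_one (by positivity)
      have h2 : (m' : ℝ≥0∞) = ENNReal.ofReal (m' : ℝ) := by
        rw [ENNReal.ofReal_natCast]
      rw [h2]
      calc ENNReal.ofReal (m' : ℝ)
          ≤ ENNReal.ofReal (Real.logb b (1/δ) / (L0+1) + 1) :=
            ENNReal.ofReal_le_ofReal h1.le
        _ = ENNReal.ofReal (Real.logb b (1/δ) / (L0+1)) + 1 := by
            rw [ENNReal.ofReal_add (by positivity) (by norm_num), ENNReal.ofReal_one]
        _ = E / ((L0+1 : ℕ) : ℝ≥0∞) + 1 := by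
            rw [ENNReal.ofReal_div_of_pos (by positivity), hE]
            congr 2
            rw [← ENNReal.ofReal_natCast (L0+1)]
            congr 1
            push_cast
            ring
        _ = E * (((L0+1 : ℕ) : ℝ≥0∞))⁻¹ + 1 := by rw [div_eq_mul_inv]
        _ ≤ E * ε4 + 1 := by
            exact add_le_add_left (mul_le_mul_right hLle _) 1
        _ = ε4 * E + 1 := by rw [mul_comm]
    -- put together : K2 ≤ A * E + C0
    have hsum : (Kprec b T2 (2*δ) (1-x) : ℝ≥0∞) ≤ A * E + C0 := by
      refine hcast.trans ?_
      calc (k : ℝ≥0∞) + ((k / (r0+1) : ℕ) : ℝ≥0∞) + ((r0+2 : ℕ) : ℝ≥0∞) + (m' : ℝ≥0∞)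
          ≤ (dbar * E) + (ε4 * E) + ((r0+2 : ℕ) : ℝ≥0∞) + (ε4 * E + 1) := by
            exact add_le_add (add_le_add (add_le_add hkE hdivk) le_rfl) hm'le
        _ = (dbar + ε4 + ε4) * E + (((r0+2 : ℕ) : ℝ≥0∞) + 1) := by
            rw [add_mul, add_mul]
            ring
        _ = A * E + C0 := by
            rw [hA, hC0]
            congr 1
            push_cast
            ring
    -- E ≤ E2 + c2
    have hEle : E ≤ E2 + c2 := by
      have hlogeq : Real.logb b (1/δ) = Real.logb b (1/(2*δ)) + Real.logb b 2 := by
        rw [← Real.logb_mul (by positivity) (by norm_num)]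
        congr 1
        field_simp
      rw [hE, hE2, hc2, hlogeq, ENNReal.ofReal_add hlog2pos.le
        (Real.logb_nonneg hb1 (by norm_num))]
    have hsum2 : (Kprec b T2 (2*δ) (1-x) : ℝ≥0∞) ≤ A * E2 + B := by
      refine hsum.trans ?_
      calc A * E + C0 ≤ A * (E2 + c2) + C0 := by gcongr
        _ = A * E2 + (A * c2 + C0) := by ring
        _ = A * E2 + B := by rw [hB]
    -- B / E2 ≤ ε4 using E2 large
    have hE2big : β ≤ E2 := by
      have hMle : Mc ≤ Real.logb b (1/(2*δ)) := by
        have h1 : (b:ℝ) ^ (Mc:ℝ) ≤ 1/(2*δ) := by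
          have h2 : δ < 1 / (4 * (b:ℝ) ^ (Mc:ℝ)) := lt_of_lt_of_le hδ1' (min_le_right _ _)
          rw [lt_div_iff₀ (by positivity)] at h2
          rw [le_div_iff₀ (by linarith : (0:ℝ) < 2*δ)]
          nlinarith [hbMc]
        rw [Real.le_logb_iff_rpow_le hb1 (by rw [lt_div_iff₀ (by linarith : (0:ℝ) < 2*δ), zero_mul]; norm_num)]
        exact h1
      rw [hE2]
      calc β = ENNReal.ofReal β.toReal := (ENNReal.ofReal_toReal hβtop).symm
        _ ≤ ENNReal.ofReal (Real.logb b (1/(2*δ))) := ENNReal.ofReal_le_ofReal hMle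
    have hBdiv : B / E2 ≤ ε4 := by
      have h1 : B ≤ E2 * ε4 := by
        have h2 : B = β * ε4 := (ENNReal.div_mul_cancel hε40 hε4top).symm
        rw [h2]
        exact mul_le_mul_left hE2big _
      rw [ENNReal.div_le_iff hE20 hE2top]
      calc B ≤ E2 * ε4 := h1
        _ = ε4 * E2 := mul_comm _ _
    -- final division
    calc (Kprec b T2 (2*δ) (1-x) : ℝ≥0∞) / E2 ≤ (A * E2 + B) / E2 :=
          ENNReal.div_le_div_right hsum2 _
      _ = A * E2 / E2 + B / E2 := ENNReal.add_div
      _ = A * (E2 / E2) + B / E2 := by rw [mul_div_assoc]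
      _ = A + B / E2 := by rw [ENNReal.div_self hE20 hE2top, mul_one]
      _ ≤ A + ε4 := add_le_add_right hBdiv _
  -- transfer frequently through δ ↦ 2δ
  have htendsto : Filter.Tendsto (fun δ : ℝ => 2*δ) (nhdsWithin 0 (Set.Ioi 0))
      (nhdsWithin 0 (Set.Ioi 0)) := by
    apply tendsto_nhdsWithin_of_tendsto_nhds_of_eventually_within
    · have hcont : Continuous (fun δ : ℝ => 2*δ) := continuous_mul_left 2
      have h1 : Filter.Tendsto (fun δ : ℝ => 2*δ) (nhds 0) (nhds 0) := by
        have h2 := hcont.tendsto (0:ℝ)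
        norm_num at h2
        exact h2
      exact h1.mono_left nhdsWithin_le_nhds
    · filter_upwards [eventually_mem_nhdsWithin] with δ hδ
      exact Set.mem_Ioi.mpr (mul_pos two_pos hδ)
  have hfreq2 : ∃ᶠ η in (nhdsWithin (0:ℝ) (Set.Ioi 0)),
      (Kprec b T2 η (1-x) : ℝ≥0∞) / ENNReal.ofReal (Real.logb b (1/η)) ≤ A + ε4 := by
    apply htendsto.frequently
    exact (hfreq.and_eventually hev).mono hmain
  have hliminf : Filter.liminf (fun δ : ℝ =>
      (Kprec b T2 δ (1-x) : ℝ≥0∞) / ENNReal.ofReal (Real.logb b (1/δ)))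
      (nhdsWithin 0 (Set.Ioi 0)) ≤ A + ε4 :=
    liminf_le_of_frequently_le hfreq2 (by isBoundedDefault)
  -- conclude
  calc dimFSb b (1 - x) ≤ _ := iInf_le _ T2
    _ ≤ A + ε4 := hliminf
    _ = D + ε := by
        rw [hA, hdbar, ← hε4sum]
        ring

end DimComp

/-- dim_FS^b(x) = dim_FS^b(real_b(comp(seq_b(x)))). -/
theorem dimFSb_comp (b : ℕ) (hb : 2 ≤ b) (x : ℝ) (hx : x ∈ Set.Ico (0:ℝ) 1)
    (S : ℕ → Fin b) (hS : realSeq b S = x) (hS' : ¬ endsBm1 b S) :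
    dimFSb b x = dimFSb b (realSeq b (compSeq b S)) := by
  have hy : realSeq b (compSeq b S) = 1 - x := by
    rw [DimComp.realSeq_comp hb S, hS]
  rw [hy]
  apply le_antisymm
  · have h := DimComp.dim_comp_le b hb (1 - x)
    rw [show (1 - (1-x)) = x by ring] at h
    exact h
  · exact DimComp.dim_comp_le b hb x
end

section
/- For every base b ≥ 2 and x ∈ [0,1), dim_FS^b(x) ≤ dim_FS(seq_b(x)), where seq_b(x) is the base-b expansion of x. -/
open Filter Set
open scoped ENNReal

-- auxiliary lemmas

theorem realb_pre (b : ℕ) (S : ℕ → Fin b) (n : ℕ) :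
    realb b (pre S n) = ∑ i ∈ Finset.range n, (S i : ℝ) / (b:ℝ)^(i+1) := by
  rw [realb, pre, ← Fin.sum_univ_eq_sum_range]
  have h : (List.ofFn fun i : Fin n => S i.1).length = n := List.length_ofFn
  apply Finset.sum_equiv (finCongr h) (by simp)
  intro i _
  simp [List.get_ofFn, finCongr]

theorem summable_digits (b : ℕ) (hb : 2 ≤ b) (S : ℕ → Fin b) :
    Summable (fun i : ℕ => (S i : ℝ) / (b:ℝ)^(i+1)) := by
  have hb0 : (0:ℝ) < b := by positivity
  have hlt : (b:ℝ)⁻¹ < 1 := by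
    rw [inv_lt_one_iff₀]; right; exact_mod_cast hb.trans_lt' one_lt_two
  have hg : Summable (fun i : ℕ => (b:ℝ) * (b:ℝ)⁻¹ ^ (i+1)) :=
    ((summable_geometric_of_lt_one (by positivity) hlt).mul_left _).comp_injective
      (add_left_injective 1)
  refine hg.of_nonneg_of_le (fun i => by positivity) (fun i => ?_)
  rw [div_eq_mul_inv, ← inv_pow]
  have h1 : (S i : ℝ) ≤ b := by
    have := (S i).isLt; exact_mod_cast this.le
  exact mul_le_mul_of_nonneg_right h1 (by positivity)

theorem close_pre (b : ℕ) (hb : 2 ≤ b) (x : ℝ) (S : ℕ → Fin b) (hS : realSeq b S = x)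
    (hS' : ¬ endsBm1 b S) (n : ℕ) :
    |realb b (pre S n) - x| < ((b:ℝ)⁻¹)^n := by
  have hb0 : (0:ℝ) < b := by positivity
  have hb1 : (1:ℝ) < b := by exact_mod_cast hb.trans_lt' one_lt_two
  set f : ℕ → ℝ := fun i => (S i : ℝ) / (b:ℝ)^(i+1) with hf
  have hsum : Summable f := summable_digits b hb S
  have htail : realb b (pre S n) + ∑' i, f (i + n) = x := by
    rw [realb_pre, ← hS, realSeq]
    exact hsum.sum_add_tsum_nat_add n
  have htail_nonneg : 0 ≤ ∑' i, f (i + n) := tsum_nonneg (fun i => by positivity)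
  -- the strict bound
  obtain ⟨m, hmn, hm⟩ : ∃ m ≥ n, (S m : ℕ) ≠ b - 1 := by
    by_contra h
    push_neg at h
    exact hS' ⟨n, h⟩
  set g : ℕ → ℝ := fun i => ((b:ℝ) - 1) * ((b:ℝ)⁻¹)^(i + n + 1) with hg
  have hlt : (b:ℝ)⁻¹ < 1 := by rw [inv_lt_one_iff₀]; right; exact hb1
  have hgsum : Summable g := by
    exact ((summable_geometric_of_lt_one (by positivity) hlt).comp_injective
      (add_left_injective (n+1))).mul_left _
  have hgsumval : ∑' i, g i = ((b:ℝ)⁻¹)^n := by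
    rw [hg, tsum_mul_left]
    have : ∀ i : ℕ, ((b:ℝ)⁻¹)^(i + n + 1) = ((b:ℝ)⁻¹)^(n+1) * ((b:ℝ)⁻¹)^i := by
      intro i; rw [← pow_add]; ring_nf
    rw [tsum_congr this, tsum_mul_left, tsum_geometric_of_lt_one (by positivity) hlt]
    have hbne : (b:ℝ) - 1 ≠ 0 := by nlinarith
    field_simp
    rw [pow_succ, one_div, mul_comm, mul_assoc, inv_mul_cancel₀ hb0.ne', mul_one]
  have hle : ∀ i : ℕ, f (i + n) ≤ g i := by
    intro i
    rw [hf, hg]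
    simp only
    rw [div_eq_mul_inv, ← inv_pow]
    have h1 : (S (i+n) : ℝ) ≤ (b:ℝ) - 1 := by
      have := (S (i+n)).isLt; 
      have : (S (i+n) : ℕ) ≤ b - 1 := by omega
      have h2 : ((S (i+n) : ℕ) : ℝ) ≤ ((b-1 : ℕ) : ℝ) := by exact_mod_cast this
      rwa [Nat.cast_sub (by omega), Nat.cast_one] at h2
    have : (i + n + 1 : ℕ) = i + n + 1 := rfl
    exact mul_le_mul_of_nonneg_right h1 (by positivity)
  have hstrict : f ((m - n) + n) < g (m - n) := by
    have hmn' : m - n + n = m := by omega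
    rw [hf, hg, hmn']
    simp only
    rw [div_eq_mul_inv, ← inv_pow]
    have h1 : (S m : ℝ) < (b:ℝ) - 1 := by
      have := (S m).isLt
      have : (S m : ℕ) < b - 1 := by omega
      have h2 : ((S m : ℕ) : ℝ) < ((b-1 : ℕ) : ℝ) := by exact_mod_cast this
      rwa [Nat.cast_sub (by omega), Nat.cast_one] at h2
    have hmn'' : m - n + n + 1 = m + 1 := by omega
    rw [hmn'']
    exact mul_lt_mul_of_pos_right h1 (by positivity)
  have hsum' : Summable (fun i => f (i + n)) := by
    exact hsum.comp_injective (add_left_injective n)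
  have hlt2 : ∑' i, f (i + n) < ((b:ℝ)⁻¹)^n := by
    rw [← hgsumval]
    exact Summable.tsum_lt_tsum hle hstrict hsum' hgsum
  rw [abs_lt]
  constructor <;> nlinarith

/-- dim_FS^b(x) ≤ dim_FS(seq_b(x)). -/
theorem dimFSb_le_dimFSseq (b : ℕ) (hb : 2 ≤ b) (x : ℝ) (hx : x ∈ Set.Ico (0:ℝ) 1)
    (S : ℕ → Fin b) (hS : realSeq b S = x) (hS' : ¬ endsBm1 b S) :
    dimFSb b x ≤ dimFSseq S := by
  have hb0 : (0:ℝ) < b := by positivity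
  have hb1 : (1:ℝ) < b := by exact_mod_cast hb.trans_lt' one_lt_two
  refine iInf_mono fun T => ?_
  set δ : ℕ → ℝ := fun n => ((b:ℝ)⁻¹)^n with hδ
  set u : ℝ → ℝ≥0∞ := fun d =>
    (Kprec b T d x : ℝ≥0∞) / ENNReal.ofReal (Real.logb b (1/d)) with hu
  have hδpos : ∀ n, 0 < δ n := fun n => by positivity
  have htend : Tendsto δ atTop (nhdsWithin 0 (Ioi 0)) := by
    apply tendsto_nhdsWithin_of_tendsto_nhds_of_eventually_within
    · exact tendsto_pow_atTop_nhds_zero_of_lt_one (by positivity)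
        (by rw [inv_lt_one_iff₀]; right; exact hb1)
    · exact Eventually.of_forall (fun n => hδpos n)
  have h1 : liminf u (nhdsWithin 0 (Ioi 0)) ≤ liminf (u ∘ δ) atTop := by
    rw [liminf_comp]
    exact liminf_le_liminf_of_le htend
  refine h1.trans (liminf_le_liminf ?_)
  filter_upwards [eventually_ge_atTop 1] with n hn
  have hKle : Kprec b T (δ n) x ≤ Kfst T (pre S n) :=
    sInf_le ⟨pre S n, close_pre b hb x S hS hS' n, rfl⟩
  have hlog : Real.logb b (1 / δ n) = n := by
    rw [hδ]
    simp only [one_div, ← inv_pow, inv_inv]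
    rw [Real.logb_pow, Real.logb_self_eq_one hb1]
    simp
  have hofReal : ENNReal.ofReal (Real.logb b (1 / δ n)) = (n : ℝ≥0∞) := by
    rw [hlog, ENNReal.ofReal_natCast]
  show u (δ n) ≤ _
  rw [hu]
  simp only
  rw [hofReal]
  exact ENNReal.div_le_div_right (ENat.toENNReal_le.mpr hKle) _
end

section
/- For every separator enumerator f and every A ⊆ [0,1), dim_H(A) ≤ dim_FS^f(A), i.e., the Hausdorff dimension of A is a lower bound for its f-enumerator finite-state dimension for every choice of enumerator f. -/
open Filter Set
open scoped ENNReal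

open scoped NNReal in
lemma placeholder_nnreal_open : True := trivial

lemma enat_sInf_mem {S : Set ℕ∞} (h : sInf S ≠ ⊤) : sInf S ∈ S := by
  rcases S.eq_empty_or_nonempty with rfl | hS
  · simp at h
  · exact csInf_mem hS

lemma geom_nat_le {c : ℕ} (hc : 2 ≤ c) (K : ℕ) :
    ∑ j ∈ Finset.range (K + 1), c ^ j ≤ c ^ (K + 1) := by
  induction K with
  | zero => simpa using by omega
  | succ K ih =>
      rw [Finset.sum_range_succ]
      have h2 : c ^ (K + 1) * 2 ≤ c ^ (K + 1) * c := Nat.mul_le_mul_left _ hc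
      have h3 : c ^ (K + 1 + 1) = c ^ (K + 1) * c := pow_succ c (K + 1)
      omega

open scoped NNReal in
lemma cover_exists {σ : Type} [Fintype σ] (f : List σ → ℝ) (T : FST σ)
    (hc : 2 ≤ Fintype.card σ) {t' : ℝ≥0} (ht'0 : 0 < (t' : ℝ)) {x : ℝ}
    (hx : Filter.liminf (fun δ : ℝ =>
      (KprecF T f δ x : ℝ≥0∞) / ENNReal.ofReal (Real.logb (Fintype.card σ) (1/δ)))
      (nhdsWithin 0 (Set.Ioi 0)) < (t' : ℝ≥0∞)) (N : ℕ) :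
    ∃ M ≥ N, ∃ π : List σ, π.length ≤ M ∧
      |f (T.out π) - x| < (Fintype.card σ : ℝ) ^ (-(M : ℝ) / (t' : ℝ)) := by
  set c := Fintype.card σ with hcdef
  have hc1 : (1 : ℝ) < c := by exact_mod_cast (by omega : 1 < c)
  have hc0 : (0 : ℝ) < c := by linarith
  set rad : ℕ → ℝ := fun k => (c : ℝ) ^ (-(k : ℝ) / (t' : ℝ)) with hrad
  have hradpos : ∀ k, 0 < rad k := fun k => Real.rpow_pos_of_pos hc0 _
  have hfreq := Filter.frequently_lt_of_liminf_lt (u := fun δ : ℝ =>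
      (KprecF T f δ x : ℝ≥0∞) / ENNReal.ofReal (Real.logb (Fintype.card σ) (1/δ)))
    (by isBoundedDefault) hx
  have hev : ∀ᶠ δ in nhdsWithin (0:ℝ) (Set.Ioi 0), δ < rad N ∧ 0 < δ := by
    have h1 : ∀ᶠ δ in nhdsWithin (0:ℝ) (Set.Ioi 0), δ < rad N :=
      Filter.Eventually.filter_mono nhdsWithin_le_nhds (gt_mem_nhds (hradpos N))
    have h2 : ∀ᶠ δ in nhdsWithin (0:ℝ) (Set.Ioi 0), δ ∈ Set.Ioi (0:ℝ) :=
      eventually_mem_nhdsWithin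
    filter_upwards [h1, h2] with δ hδ1 hδ2 using ⟨hδ1, hδ2⟩
  obtain ⟨δ, hlt, hδrad, hδ0⟩ := (hfreq.and_eventually hev).exists
  -- basic facts about δ
  have hrad1 : rad N ≤ 1 :=
    Real.rpow_le_one_of_one_le_of_nonpos hc1.le
      (div_nonpos_iff.mpr (Or.inr ⟨neg_nonpos.2 (Nat.cast_nonneg N), ht'0.le⟩))
  have hδ1 : δ < 1 := lt_of_lt_of_le hδrad hrad1
  have hinv1 : 1 < 1 / δ := by rw [lt_div_iff₀ hδ0]; linarith
  have hinv0 : 0 < 1 / δ := by linarith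
  set Lg := Real.logb c (1 / δ) with hLg
  have hLgpos : 0 < Lg := Real.logb_pos hc1 hinv1
  -- turn the ENNReal inequality into a real one
  have hD0 : ENNReal.ofReal Lg ≠ 0 := by
    simp only [ne_eq, ENNReal.ofReal_eq_zero, not_le]
    exact hLgpos
  have hDt : ENNReal.ofReal Lg ≠ ⊤ := ENNReal.ofReal_ne_top
  have hmul : (KprecF T f δ x : ℝ≥0∞) < (t' : ℝ≥0∞) * ENNReal.ofReal Lg :=
    (ENNReal.div_lt_iff (Or.inl hD0) (Or.inl hDt)).1 hlt
  have hfin : KprecF T f δ x ≠ ⊤ := by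
    intro h
    rw [h] at hmul
    simp only [ENat.toENNReal_top] at hmul
    exact not_top_lt hmul
  -- extract the witness w and π
  have hKmem : KprecF T f δ x ∈
      {k : ℕ∞ | ∃ w : List σ, |f w - x| < δ ∧ Kfst T w = k} :=
    enat_sInf_mem hfin
  obtain ⟨w, hwx, hwK⟩ := hKmem
  have hKfin : Kfst T w ≠ ⊤ := by rw [hwK]; exact hfin
  have hKfmem : Kfst T w ∈
      {m : ℕ∞ | ∃ π : List σ, T.out π = w ∧ (π.length : ℕ∞) = m} :=
    enat_sInf_mem hKfin
  obtain ⟨π, hπout, hπlen⟩ := hKfmem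
  set k := π.length with hkdef
  have hkK : (k : ℕ∞) = KprecF T f δ x := by rw [hπlen, hwK]
  rw [← hkK] at hmul
  have hkreal : (k : ℝ) < (t' : ℝ) * Lg := by
    have h2 : (t' : ℝ≥0∞) * ENNReal.ofReal Lg = ENNReal.ofReal ((t' : ℝ) * Lg) := by
      rw [ENNReal.ofReal_mul t'.coe_nonneg]
      congr 1
      exact ENNReal.ofReal_coe_nnreal.symm
    have hmul' : ENNReal.ofReal (k : ℝ) < ENNReal.ofReal ((t' : ℝ) * Lg) := by
      rw [ENNReal.ofReal_natCast, ← h2]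
      exact_mod_cast hmul
    exact (ENNReal.ofReal_lt_ofReal_iff (mul_pos ht'0 hLgpos)).1 hmul'
  set M := ⌊(t' : ℝ) * Lg⌋₊ with hM
  have hkM : k ≤ M := Nat.le_floor hkreal.le
  have hNM : N ≤ M := by
    apply Nat.le_floor
    have h3 : (c : ℝ) ^ ((N : ℝ) / (t' : ℝ)) < 1 / δ := by
      have h4 : δ < ((c : ℝ) ^ ((N : ℝ) / (t' : ℝ)))⁻¹ := by
        rw [← Real.rpow_neg hc0.le, ← neg_div]
        exact hδrad
      rw [one_div]
      exact (lt_inv_comm₀ hδ0 (Real.rpow_pos_of_pos hc0 _)).1 h4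
    have h5 : (N : ℝ) / (t' : ℝ) < Lg := (Real.lt_logb_iff_rpow_lt hc1 hinv0).2 h3
    calc (N : ℝ) = ((N : ℝ) / (t' : ℝ)) * t' := by field_simp
    _ ≤ Lg * t' := by nlinarith
    _ = (t' : ℝ) * Lg := mul_comm _ _
  have hδM : δ ≤ rad M := by
    have h6 : (M : ℝ) / (t' : ℝ) ≤ Lg := by
      rw [div_le_iff₀ ht'0]
      calc (M : ℝ) ≤ (t' : ℝ) * Lg := Nat.floor_le (by positivity)
      _ = Lg * t' := mul_comm _ _
    have h7 : (c : ℝ) ^ ((M : ℝ) / (t' : ℝ)) ≤ δ⁻¹ := by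
      rw [← one_div]
      exact (Real.le_logb_iff_rpow_le hc1 hinv0).1 h6
    have h8 : δ ≤ ((c : ℝ) ^ ((M : ℝ) / (t' : ℝ)))⁻¹ :=
      (le_inv_comm₀ hδ0 (Real.rpow_pos_of_pos hc0 _)).2 h7
    rwa [← Real.rpow_neg hc0.le, ← neg_div] at h8
  exact ⟨M, hNM, π, hkM, by rw [hπout]; exact lt_of_lt_of_le hwx hδM⟩


open scoped NNReal in
lemma dimH_le_main {σ : Type} [Fintype σ] (f : List σ → ℝ) (T : FST σ)
    (hc : 2 ≤ Fintype.card σ) {t' t : ℝ≥0} (ht'0 : 0 < (t' : ℝ))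
    (htt : (t' : ℝ) < (t : ℝ)) (A : Set ℝ)
    (hA : ∀ x ∈ A, Filter.liminf (fun δ : ℝ =>
      (KprecF T f δ x : ℝ≥0∞) / ENNReal.ofReal (Real.logb (Fintype.card σ) (1/δ)))
      (nhdsWithin 0 (Set.Ioi 0)) < (t' : ℝ≥0∞)) :
    dimH A ≤ (t : ℝ≥0∞) := by
  classical
  set c := Fintype.card σ with hcdef
  have hc1 : (1 : ℝ) < c := by exact_mod_cast (by omega : 1 < c)
  have hc0 : (0 : ℝ) < c := by linarith
  have ht'ne : (t' : ℝ) ≠ 0 := ht'0.ne'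
  set rad : ℕ → ℝ := fun k => (c : ℝ) ^ (-(k : ℝ) / (t' : ℝ)) with hradd
  have hradpos : ∀ k, 0 < rad k := fun k => Real.rpow_pos_of_pos hc0 _
  have hradmono : ∀ N m : ℕ, rad (N + m) ≤ rad N := by
    intro N m
    apply Real.rpow_le_rpow_of_exponent_le hc1.le
    have : (0:ℝ) ≤ (m:ℝ) := Nat.cast_nonneg m
    rw [div_le_div_iff_of_pos_right ht'0]
    push_cast; linarith
  -- rad is a geometric sequence
  have hradgeo : ∀ k : ℕ, rad k = ((c : ℝ) ^ (-(1:ℝ) / (t' : ℝ))) ^ k := by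
    intro k
    rw [← Real.rpow_natCast ((c : ℝ) ^ (-(1:ℝ) / (t' : ℝ))) k, ← Real.rpow_mul hc0.le]
    simp only [hradd]
    congr 1
    ring
  have hq0 : (0:ℝ) ≤ (c : ℝ) ^ (-(1:ℝ) / (t' : ℝ)) := (Real.rpow_pos_of_pos hc0 _).le
  have hq1 : (c : ℝ) ^ (-(1:ℝ) / (t' : ℝ)) < 1 := by
    apply Real.rpow_lt_one_of_one_lt_of_neg hc1
    rw [neg_div]
    have : 0 < (1:ℝ) / (t' : ℝ) := by positivity
    linarith
  -- the covering family
  set ι : ℕ → Type := fun N => Σ m : ℕ, Σ j : Fin (N + m + 1), (Fin (j : ℕ) → σ) with hι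
  set tN : ∀ N : ℕ, ι N → Set ℝ :=
    fun N i => Metric.ball (f (T.out (List.ofFn i.2.2))) (rad (N + i.1)) with htNdef
  set r : ℕ → ℝ≥0∞ := fun N => ENNReal.ofReal (2 * rad N) with hrdef
  have hr0 : Filter.Tendsto r Filter.atTop (nhds 0) := by
    have h1 : Filter.Tendsto (fun N : ℕ => rad N) Filter.atTop (nhds 0) := by
      simp only [hradgeo]
      exact tendsto_pow_atTop_nhds_zero_of_lt_one hq0 hq1
    have h2 : Filter.Tendsto (fun N : ℕ => 2 * rad N) Filter.atTop (nhds (2 * 0)) :=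
      h1.const_mul 2
    have h3 := ENNReal.tendsto_ofReal (a := 2 * 0) (by simpa using h2)
    simpa only [mul_zero, ENNReal.ofReal_zero] using h3
  have hdiam : ∀ (N : ℕ) (i : ι N),
      EMetric.diam (tN N i) ≤ ENNReal.ofReal (2 * rad (N + i.1)) := by
    intro N i
    have h1 : tN N i = EMetric.ball (f (T.out (List.ofFn i.2.2)))
        (ENNReal.ofReal (rad (N + i.1))) := (Metric.emetric_ball).symm
    rw [h1]
    refine le_trans EMetric.diam_ball ?_
    rw [ENNReal.ofReal_mul (by norm_num)]
    simp
  have ht : ∀ (N : ℕ) (i : ι N), EMetric.diam (tN N i) ≤ r N := by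
    intro N i
    refine (hdiam N i).trans (ENNReal.ofReal_le_ofReal ?_)
    have := hradmono N i.1
    linarith
  have hst : ∀ N : ℕ, A ⊆ ⋃ i, tN N i := by
    intro N x hx
    obtain ⟨M, hNM, π, hπM, hπx⟩ := cover_exists f T hc ht'0 (hA x hx) N
    have hMN : N + (M - N) = M := by omega
    refine Set.mem_iUnion.2 ⟨⟨M - N, ⟨π.length, by omega⟩, π.get⟩, ?_⟩
    show x ∈ Metric.ball (f (T.out (List.ofFn π.get))) (rad (N + (M - N)))
    rw [List.ofFn_get, hMN]
    rw [Metric.mem_ball, Real.dist_eq, abs_sub_comm]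
    exact hπx
  -- apply the Hausdorff measure bound
  have key := MeasureTheory.Measure.hausdorffMeasure_le_liminf_tsum ((t : ℝ≥0) : ℝ) A r hr0 tN
      (Filter.Eventually.of_forall ht) (Filter.Eventually.of_forall hst)
  -- bound the sums
  set qq : ℝ := (c : ℝ) ^ ((1:ℝ) - (t : ℝ) / (t' : ℝ)) with hqqdef
  have hqq0 : 0 ≤ qq := (Real.rpow_pos_of_pos hc0 _).le
  have hqq1 : qq < 1 := by
    apply Real.rpow_lt_one_of_one_lt_of_neg hc1
    have h1 : 1 < (t : ℝ) / (t' : ℝ) := (one_lt_div ht'0).2 htt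
    linarith
  set C0 : ℝ≥0∞ := ENNReal.ofReal (2 ^ ((t : ℝ≥0) : ℝ) * c) with hC0
  set C : ℝ≥0∞ := C0 * (1 - ENNReal.ofReal qq)⁻¹ with hC
  have hreal : ∀ k : ℕ, (c : ℝ) ^ (k + 1) * (2 * rad k) ^ ((t : ℝ≥0) : ℝ)
      = (2 ^ ((t : ℝ≥0) : ℝ) * c) * qq ^ k := by
    intro k
    have h1 : (2 * rad k) ^ ((t : ℝ≥0) : ℝ)
        = 2 ^ ((t : ℝ≥0) : ℝ) * (c : ℝ) ^ ((-(k : ℝ) / (t' : ℝ)) * (t : ℝ)) := by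
      rw [Real.mul_rpow (by norm_num) (hradpos k).le]
      congr 1
      show ((c : ℝ) ^ (-(k : ℝ) / (t' : ℝ))) ^ ((t : ℝ≥0) : ℝ) = _
      rw [← Real.rpow_mul hc0.le]
    have h2 : qq ^ k = (c : ℝ) ^ (((1:ℝ) - (t : ℝ) / (t' : ℝ)) * k) := by
      rw [hqqdef, ← Real.rpow_natCast ((c : ℝ) ^ ((1:ℝ) - (t : ℝ) / (t' : ℝ))) k,
        ← Real.rpow_mul hc0.le]
    have h3 : (c : ℝ) ^ (k + 1) = (c : ℝ) ^ (((k : ℝ) + 1)) := by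
      rw [← Real.rpow_natCast (c : ℝ) (k + 1)]
      push_cast
      ring_nf
    rw [h1, h2, h3]
    have e1 : (c:ℝ) ^ ((k:ℝ)+1) * (2 ^ ((t : ℝ≥0) : ℝ) * (c:ℝ) ^ ((-(k : ℝ) / (t' : ℝ)) * (t : ℝ)))
        = 2 ^ ((t : ℝ≥0) : ℝ) * ((c:ℝ) ^ ((k:ℝ)+1) * (c:ℝ) ^ ((-(k : ℝ) / (t' : ℝ)) * (t : ℝ))) := by
      ring
    have e2 : (2 ^ ((t : ℝ≥0) : ℝ) * (c:ℝ)) * (c:ℝ) ^ (((1:ℝ) - (t : ℝ) / (t' : ℝ)) * k)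
        = 2 ^ ((t : ℝ≥0) : ℝ) * ((c:ℝ) ^ (1:ℝ) * (c:ℝ) ^ (((1:ℝ) - (t : ℝ) / (t' : ℝ)) * k)) := by
      rw [Real.rpow_one]
      ring
    rw [e1, e2, ← Real.rpow_add hc0, ← Real.rpow_add hc0]
    congr 1
    field_simp
    ring
  have hgbound : ∀ k : ℕ, ((c : ℕ) : ℝ≥0∞) ^ (k + 1)
      * (ENNReal.ofReal (2 * rad k)) ^ ((t : ℝ≥0) : ℝ)
      = C0 * (ENNReal.ofReal qq) ^ k := by
    intro k
    have hmn : (0:ℝ) ≤ 2 * rad k := by linarith [hradpos k]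
    rw [ENNReal.ofReal_rpow_of_nonneg hmn t.coe_nonneg]
    rw [show ((c : ℕ) : ℝ≥0∞) = ENNReal.ofReal (c : ℝ) from (ENNReal.ofReal_natCast c).symm]
    rw [← ENNReal.ofReal_pow hc0.le, ← ENNReal.ofReal_mul (by positivity)]
    rw [hC0, ← ENNReal.ofReal_pow hqq0, ← ENNReal.ofReal_mul (by positivity)]
    exact congrArg _ (hreal k)
  have hcard : ∀ K : ℕ, (Fintype.card (Σ j : Fin (K + 1), (Fin (j : ℕ) → σ))) ≤ c ^ (K + 1) := by
    intro K
    rw [Fintype.card_sigma]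
    have h1 : ∀ j : Fin (K + 1), Fintype.card (Fin (j : ℕ) → σ) = c ^ (j : ℕ) := by
      intro j
      rw [Fintype.card_fun, Fintype.card_fin]
    calc ∑ j : Fin (K + 1), Fintype.card (Fin (j : ℕ) → σ)
        = ∑ j : Fin (K + 1), c ^ (j : ℕ) := by
          exact Finset.sum_congr rfl fun j _ => h1 j
      _ = ∑ j ∈ Finset.range (K + 1), c ^ j := Fin.sum_univ_eq_sum_range _ _
      _ ≤ c ^ (K + 1) := geom_nat_le hc K
  have hsum : ∀ N : ℕ, (∑' i : ι N, EMetric.diam (tN N i) ^ ((t : ℝ≥0) : ℝ)) ≤ C := by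
    intro N
    have hle1 : (∑' i : ι N, EMetric.diam (tN N i) ^ ((t : ℝ≥0) : ℝ))
        ≤ ∑' i : ι N, (ENNReal.ofReal (2 * rad (N + i.1))) ^ ((t : ℝ≥0) : ℝ) :=
      ENNReal.tsum_le_tsum fun i => ENNReal.rpow_le_rpow (hdiam N i) t.coe_nonneg
    have hle2 : (∑' i : ι N, (ENNReal.ofReal (2 * rad (N + i.1))) ^ ((t : ℝ≥0) : ℝ))
        = ∑' m : ℕ, ∑' _jv : (Σ j : Fin (N + m + 1), (Fin (j : ℕ) → σ)),
            (ENNReal.ofReal (2 * rad (N + m))) ^ ((t : ℝ≥0) : ℝ) :=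
      ENNReal.tsum_sigma' _
    have hle3 : ∀ m : ℕ, (∑' _jv : (Σ j : Fin (N + m + 1), (Fin (j : ℕ) → σ)),
        (ENNReal.ofReal (2 * rad (N + m))) ^ ((t : ℝ≥0) : ℝ))
        ≤ C0 * (ENNReal.ofReal qq) ^ (N + m) := by
      intro m
      rw [tsum_fintype]
      rw [Finset.sum_const, nsmul_eq_mul]
      rw [← hgbound (N + m)]
      apply mul_le_mul_left
      have h2 := hcard (N + m)
      calc ((Finset.univ.card : ℕ) : ℝ≥0∞)
          = ((Fintype.card (Σ j : Fin (N + m + 1), (Fin (j : ℕ) → σ)) : ℕ) : ℝ≥0∞) := by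
            rw [Finset.card_univ]
        _ ≤ ((c ^ (N + m + 1) : ℕ) : ℝ≥0∞) := by exact_mod_cast h2
        _ = ((c : ℕ) : ℝ≥0∞) ^ (N + m + 1) := by push_cast; ring
    have hle4 : ∀ m : ℕ, C0 * (ENNReal.ofReal qq) ^ (N + m)
        ≤ C0 * (ENNReal.ofReal qq) ^ m := by
      intro m
      apply mul_le_mul_right
      rw [pow_add]
      calc (ENNReal.ofReal qq) ^ N * (ENNReal.ofReal qq) ^ m
          ≤ 1 * (ENNReal.ofReal qq) ^ m := by
            apply mul_le_mul_left
            exact pow_le_one' (ENNReal.ofReal_le_one.2 hqq1.le) N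
        _ = (ENNReal.ofReal qq) ^ m := one_mul _
    calc (∑' i : ι N, EMetric.diam (tN N i) ^ ((t : ℝ≥0) : ℝ))
        ≤ ∑' m : ℕ, ∑' _jv : (Σ j : Fin (N + m + 1), (Fin (j : ℕ) → σ)),
            (ENNReal.ofReal (2 * rad (N + m))) ^ ((t : ℝ≥0) : ℝ) := hle2 ▸ hle1
      _ ≤ ∑' m : ℕ, C0 * (ENNReal.ofReal qq) ^ m :=
          ENNReal.tsum_le_tsum fun m => (hle3 m).trans (hle4 m)
      _ = C0 * ∑' m : ℕ, (ENNReal.ofReal qq) ^ m := ENNReal.tsum_mul_left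
      _ = C := by rw [ENNReal.tsum_geometric]
  have hCne : C ≠ ⊤ := by
    apply ENNReal.mul_ne_top ENNReal.ofReal_ne_top
    rw [ENNReal.inv_ne_top]
    have : ENNReal.ofReal qq < 1 := ENNReal.ofReal_lt_one.2 hqq1
    exact (tsub_pos_iff_lt.2 this).ne'
  have hfinal : MeasureTheory.Measure.hausdorffMeasure ((t : ℝ≥0) : ℝ) A ≤ C := by
    refine key.trans ?_
    calc Filter.liminf (fun N => ∑' i : ι N, EMetric.diam (tN N i) ^ ((t : ℝ≥0) : ℝ))
          Filter.atTop
        ≤ Filter.liminf (fun _ : ℕ => C) Filter.atTop :=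
          Filter.liminf_le_liminf (Filter.Eventually.of_forall hsum)
      _ = C := Filter.liminf_const C
  exact dimH_le_of_hausdorffMeasure_ne_top (ne_top_of_le_ne_top hCne hfinal)

/-- dim_H(A) ≤ dim_FS^f(A) for every separator enumerator f. -/
theorem dimH_le_dimFSfSet (σ : Type) [Fintype σ] (f : List σ → ℝ) (hf : isSE f)
    (A : Set ℝ) (hA : A ⊆ Set.Ico (0:ℝ) 1) :
    dimH A ≤ dimFSfSet f A := by
  classical
  rw [dimFSfSet]
  refine le_iInf fun T => ?_
  by_contra hcon
  push_neg at hcon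
  obtain ⟨t, hSt, htd⟩ := ENNReal.lt_iff_exists_nnreal_btwn.1 hcon
  obtain ⟨t', hSt', ht't⟩ := ENNReal.lt_iff_exists_nnreal_btwn.1 hSt
  have hxlt : ∀ x ∈ A, Filter.liminf (fun δ : ℝ =>
      (KprecF T f δ x : ℝ≥0∞) / ENNReal.ofReal (Real.logb (Fintype.card σ) (1/δ)))
      (nhdsWithin 0 (Set.Ioi 0)) < (t' : ℝ≥0∞) := by
    intro x hx
    refine lt_of_le_of_lt ?_ hSt'
    exact le_biSup (fun x => Filter.liminf (fun δ : ℝ =>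
      (KprecF T f δ x : ℝ≥0∞) / ENNReal.ofReal (Real.logb (Fintype.card σ) (1/δ)))
      (nhdsWithin 0 (Set.Ioi 0))) hx
  rcases Nat.lt_or_ge (Fintype.card σ) 2 with hc | hc
  · -- degenerate alphabets
    rcases (by omega : Fintype.card σ = 0 ∨ Fintype.card σ = 1) with hc0 | hc1
    · -- empty alphabet: contradicts density of the range of f
      have hemp : IsEmpty σ := Fintype.card_eq_zero_iff.1 hc0
      have hnil : ∀ w : List σ, w = [] := by
        intro w
        cases w with
        | nil => rfl
        | cons a _ => exact hemp.elim a
      have hrange : Set.range f ⊆ {f []} := by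
        rintro y ⟨w, rfl⟩
        rw [hnil w]
        rfl
      have h0 : (0:ℝ) ∈ closure (Set.range f) := hf.2 0 ⟨le_refl 0, zero_le_one⟩
      have h1 : (1:ℝ) ∈ closure (Set.range f) := hf.2 1 ⟨zero_le_one, le_refl 1⟩
      have hcl : closure (Set.range f) ⊆ {f []} :=
        closure_minimal hrange isClosed_singleton
      have e0 : (0:ℝ) = f [] := hcl h0
      have e1 : (1:ℝ) = f [] := hcl h1
      linarith [e0, e1.symm]
    · -- one-letter alphabet: the liminf is `⊤` unless `x = f (T.out [])`
      have hlogb : ∀ δ : ℝ, Real.logb (Fintype.card σ) (1/δ) = 0 := by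
        intro δ
        rw [hc1]
        simp [Real.logb]
      have hsub : A.Subsingleton := by
        have hpt : ∀ x ∈ A, x = f (T.out []) := by
          intro x hx
          have hfreq := Filter.frequently_lt_of_liminf_lt (u := fun δ : ℝ =>
              (KprecF T f δ x : ℝ≥0∞) / ENNReal.ofReal (Real.logb (Fintype.card σ) (1/δ)))
            (by isBoundedDefault) (hxlt x hx)
          have hclose : ∀ ε : ℝ, 0 < ε → |f (T.out []) - x| < ε := by
            intro ε hε
            have hev : ∀ᶠ δ in nhdsWithin (0:ℝ) (Set.Ioi 0), δ < ε :=
              Filter.Eventually.filter_mono nhdsWithin_le_nhds (gt_mem_nhds hε)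
            obtain ⟨δ, hlt, hδε⟩ := (hfreq.and_eventually hev).exists
            simp only [hlogb δ, ENNReal.ofReal_zero] at hlt
            have hK0 : KprecF T f δ x = 0 := by
              by_contra hK
              have hKne : (KprecF T f δ x : ℝ≥0∞) ≠ 0 := by
                intro h
                apply hK
                apply ENat.toENNReal_strictMono.injective
                rw [h, ENat.toENNReal_zero]
              rw [ENNReal.div_zero hKne] at hlt
              exact not_top_lt hlt
            have hmem : KprecF T f δ x ∈
                {k : ℕ∞ | ∃ w : List σ, |f w - x| < δ ∧ Kfst T w = k} :=
              enat_sInf_mem (show KprecF T f δ x ≠ ⊤ by rw [hK0]; simp)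
            obtain ⟨w, hwx, hwK⟩ := hmem
            rw [hK0] at hwK
            have hwfin : Kfst T w ≠ ⊤ := by rw [hwK]; simp
            have hmem2 : Kfst T w ∈
                {m : ℕ∞ | ∃ π : List σ, T.out π = w ∧ (π.length : ℕ∞) = m} :=
              enat_sInf_mem (show Kfst T w ≠ ⊤ from hwfin)
            obtain ⟨π, hπout, hπlen⟩ := hmem2
            rw [hwK] at hπlen
            have hπnil : π = [] := by
              have : π.length = 0 := by exact_mod_cast hπlen
              exact List.length_eq_zero_iff.1 this
            rw [hπnil] at hπout
            rw [← hπout] at hwx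
            exact lt_of_lt_of_le hwx hδε.le
          have : |f (T.out []) - x| = 0 := by
            by_contra habs
            have hpos : 0 < |f (T.out []) - x| := lt_of_le_of_ne (abs_nonneg _) (Ne.symm habs)
            exact lt_irrefl _ (hclose _ hpos)
          have := abs_eq_zero.1 this
          linarith
        intro x hx y hy
        rw [hpt x hx, hpt y hy]
      have : dimH A = 0 := dimH_subsingleton hsub
      rw [this] at hcon
      exact not_lt.2 (zero_le ..) hcon
  · -- main case
    have ht'0 : 0 < (t' : ℝ) := by
      have : (0 : ℝ≥0∞) < (t' : ℝ≥0∞) := lt_of_le_of_lt (zero_le ..) hSt'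
      exact_mod_cast this
    have httR : (t' : ℝ) < (t : ℝ) := by exact_mod_cast ht't
    have hdim := dimH_le_main f T hc ht'0 httR A hxlt
    exact absurd hdim (not_le.2 htd)
end
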